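/- Let X₁,…,X_{n_i} i.i.d. N_d(μ_i, Σ_i) and Y₁,…,Y_{n_r} i.i.d. N_d(μ_r, Σ_r), all independent, n_i, n_r ≥ 2, T_S symmetric. Then A₂ = (4·C(n_i,2)·C(n_r,2))⁻¹ Σ_{ℓ₁>ℓ₂} Σ_{k₁>k₂} [(X_{ℓ₁}−X_{ℓ₂})ᵀ T_S (Y_{k₁}−Y_{k₂})]² is an unbiased estimator of tr(T_S Σ_i T_S Σ_r). -/

import Mathlib

open Matrix MeasureTheory ProbabilityTheory
open scoped BigOperators

/-- `X` is a Gaussian vector with mean `μ` and covariance `S` (Cramér–Wold). -/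
def IsGaussianVec {Ω : Type*} [MeasurableSpace Ω] (P : Measure Ω) {d : ℕ}
    (X : Ω → Fin d → ℝ) (μ : Fin d → ℝ) (S : Matrix (Fin d) (Fin d) ℝ) : Prop :=
  ∀ u : Fin d → ℝ,
    Measure.map (fun ω => u ⬝ᵥ X ω) P =
      gaussianReal (u ⬝ᵥ μ) (u ⬝ᵥ S.mulVec u).toNNReal

open Real
open scoped NNReal ENNReal

lemma integral_self_mul_exp_neg_mul_sq (b : ℝ) :
    ∫ x : ℝ, x * Real.exp (-b * x ^ 2) = 0 := by
  set f : ℝ → ℝ := fun x => x * Real.exp (-b * x ^ 2) with hf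
  have h : ∫ x : ℝ, f (-x) = ∫ x : ℝ, f x :=
    (Measure.measurePreserving_neg (volume : Measure ℝ)).integral_comp
      (Homeomorph.neg ℝ).measurableEmbedding f
  have h2 : (fun x : ℝ => f (-x)) = fun x => - f x := by funext x; simp [hf]
  rw [h2, integral_neg] at h
  linarith

lemma integral_sq_mul_exp_neg_mul_sq {b : ℝ} (hb : 0 < b) :
    ∫ x : ℝ, x ^ 2 * Real.exp (-b * x ^ 2) = (2 * b)⁻¹ * Real.sqrt (π / b) := by
  have hu : ∀ x : ℝ, HasDerivAt (fun y : ℝ => y) 1 x := fun x => hasDerivAt_id x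
  have hv : ∀ x : ℝ, HasDerivAt (fun y : ℝ => -(2 * b)⁻¹ * Real.exp (-b * y ^ 2))
      (x * Real.exp (-b * x ^ 2)) x := by
    intro x
    have h1 : HasDerivAt (fun y : ℝ => -b * y ^ 2) (-b * (2 * x)) x := by
      simpa using ((hasDerivAt_pow 2 x).const_mul (-b))
    have h2 := (h1.exp).const_mul (-(2 * b)⁻¹)
    refine h2.congr_deriv ?_
    field_simp
  have hint : Integrable (fun x : ℝ => x ^ 2 * Real.exp (-b * x ^ 2)) := by
    have := integrable_rpow_mul_exp_neg_mul_sq hb (s := 2) (by norm_num)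
    simpa [Real.rpow_natCast] using this
  have huv' : Integrable ((fun y : ℝ => y) * fun x => x * Real.exp (-b * x ^ 2)) := by
    apply hint.congr
    · filter_upwards with x; simp; ring
  have hu'v : Integrable ((fun _ : ℝ => (1:ℝ)) * fun y : ℝ => -(2 * b)⁻¹ * Real.exp (-b * y ^ 2)) := by
    apply ((integrable_exp_neg_mul_sq hb).const_mul (-(2 * b)⁻¹)).congr
    filter_upwards with x; simp
  have huv : Integrable ((fun y : ℝ => y) * fun y : ℝ => -(2 * b)⁻¹ * Real.exp (-b * y ^ 2)) := by
    apply ((integrable_mul_exp_neg_mul_sq hb).const_mul (-(2 * b)⁻¹)).congr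
    filter_upwards with x; simp; ring
  have key := integral_mul_deriv_eq_deriv_mul_of_integrable (fun x _ => hu x) (fun x _ => hv x) huv' hu'v huv
  have e1 : ∫ x : ℝ, x * (x * Real.exp (-b * x ^ 2)) = ∫ x : ℝ, x ^ 2 * Real.exp (-b * x ^ 2) := by
    congr 1; funext x; ring
  rw [e1] at key
  rw [key]
  have e2 : ∫ x : ℝ, (1:ℝ) * (-(2 * b)⁻¹ * Real.exp (-b * x ^ 2)) =
      -(2 * b)⁻¹ * ∫ x : ℝ, Real.exp (-b * x ^ 2) := by
    simp_rw [one_mul]; rw [integral_const_mul]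
  rw [e2, integral_gaussian]
  ring

lemma gaussianReal_moments (m : ℝ) (v : ℝ≥0) :
    Integrable (fun x : ℝ => x) (gaussianReal m v) ∧
    Integrable (fun x : ℝ => x ^ 2) (gaussianReal m v) ∧
    (∫ x, x ∂gaussianReal m v) = m ∧
    (∫ x, x ^ 2 ∂gaussianReal m v) = (v : ℝ) + m ^ 2 := by
  rcases eq_or_ne v 0 with hv | hv
  · subst hv
    rw [gaussianReal_zero_var]
    refine ⟨(integrable_const m).congr (ae_eq_dirac fun x : ℝ => x).symm,
      (integrable_const (m ^ 2)).congr (ae_eq_dirac fun x : ℝ => x ^ 2).symm, ?_, ?_⟩ <;>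
      simp [integral_dirac]
  -- v ≠ 0
  have hvpos : (0:ℝ) < (v:ℝ) := by
    exact_mod_cast (pos_iff_ne_zero).2 hv
  set b : ℝ := (2 * (v:ℝ))⁻¹ with hbdef
  set c : ℝ := (Real.sqrt (2 * π * v))⁻¹ with hcdef
  have hb : 0 < b := by rw [hbdef]; positivity
  have hpib : π / b = 2 * π * (v:ℝ) := by rw [hbdef]; field_simp
  have hc1 : c * Real.sqrt (π / b) = 1 := by
    rw [hpib, hcdef]
    exact inv_mul_cancel₀ (ne_of_gt (Real.sqrt_pos.2 (by positivity)))
  have hpdf : ∀ y : ℝ, gaussianPDFReal m v (y + m) = c * Real.exp (-b * y ^ 2) := by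
    intro y
    unfold gaussianPDFReal
    rw [← hcdef]
    congr 1
    rw [hbdef]
    ring_nf
  -- integrability of the three shifted integrands
  have hintE : Integrable (fun y : ℝ => Real.exp (-b * y ^ 2)) := integrable_exp_neg_mul_sq hb
  have hintY : Integrable (fun y : ℝ => y * Real.exp (-b * y ^ 2)) := integrable_mul_exp_neg_mul_sq hb
  have hintY2 : Integrable (fun y : ℝ => y ^ 2 * Real.exp (-b * y ^ 2)) := by
    have := integrable_rpow_mul_exp_neg_mul_sq hb (s := 2) (by norm_num)
    simpa [Real.rpow_natCast] using this
  have J1 : Integrable (fun y : ℝ => (y + m) * (c * Real.exp (-b * y ^ 2))) := by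
    apply ((hintY.const_mul c).add (hintE.const_mul (m * c))).congr
    filter_upwards with y; simp only [Pi.add_apply]; ring
  have J2 : Integrable (fun y : ℝ => (y + m) ^ 2 * (c * Real.exp (-b * y ^ 2))) := by
    apply (((hintY2.const_mul c).add (hintY.const_mul (2 * m * c))).add
      (hintE.const_mul (m ^ 2 * c))).congr
    filter_upwards with y; simp only [Pi.add_apply]; ring
  -- values of the shifted integrals
  have V1 : ∫ y : ℝ, (y + m) * (c * Real.exp (-b * y ^ 2)) = m := by
    have : ∀ y : ℝ, (y + m) * (c * Real.exp (-b * y ^ 2)) =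
        c * (y * Real.exp (-b * y ^ 2)) + (m * c) * Real.exp (-b * y ^ 2) := by
      intro y; ring
    simp_rw [this]
    rw [integral_add (hintY.const_mul c) (hintE.const_mul (m * c)),
      integral_const_mul, integral_const_mul, integral_self_mul_exp_neg_mul_sq,
      integral_gaussian]
    linear_combination m * hc1
  have V2 : ∫ y : ℝ, (y + m) ^ 2 * (c * Real.exp (-b * y ^ 2)) = (v : ℝ) + m ^ 2 := by
    have : ∀ y : ℝ, (y + m) ^ 2 * (c * Real.exp (-b * y ^ 2)) =
        c * (y ^ 2 * Real.exp (-b * y ^ 2)) + ((2 * m * c) * (y * Real.exp (-b * y ^ 2))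
          + (m ^ 2 * c) * Real.exp (-b * y ^ 2)) := by
      intro y; ring
    simp_rw [this]
    have h23 : Integrable (fun y : ℝ => (2 * m * c) * (y * Real.exp (-b * y ^ 2))
        + (m ^ 2 * c) * Real.exp (-b * y ^ 2)) := by
      apply ((hintY.const_mul (2 * m * c)).add (hintE.const_mul (m ^ 2 * c))).congr
      filter_upwards with y; simp only [Pi.add_apply]
    rw [integral_add (hintY2.const_mul c) h23,
      integral_add (hintY.const_mul (2 * m * c)) (hintE.const_mul (m ^ 2 * c)),
      integral_const_mul, integral_const_mul, integral_const_mul,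
      integral_self_mul_exp_neg_mul_sq, integral_sq_mul_exp_neg_mul_sq hb, integral_gaussian]
    have hcv : c * ((2 * b)⁻¹ * Real.sqrt (π / b)) = (v : ℝ) := by
      have h' : c * ((2 * b)⁻¹ * Real.sqrt (π / b)) = (2 * b)⁻¹ * (c * Real.sqrt (π / b)) := by
        ring
      rw [h', hc1, mul_one, hbdef]
      field_simp
    rw [hcv]
    linear_combination m ^ 2 * hc1
  -- transfer to the withDensity measure
  rw [gaussianReal_of_var_ne_zero m hv]
  have hmeaspdf : Measurable (gaussianPDF m v) := measurable_gaussianPDF m v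
  have hlt : ∀ᵐ x ∂(volume : Measure ℝ), gaussianPDF m v x < ∞ :=
    ae_of_all _ fun x => ENNReal.ofReal_lt_top
  have hiff : ∀ g : ℝ → ℝ, Integrable g (volume.withDensity (gaussianPDF m v)) ↔
      Integrable (fun x => g x * gaussianPDFReal m v x) volume := by
    intro g
    rw [integrable_withDensity_iff hmeaspdf hlt]
    apply integrable_congr
    filter_upwards with x
    rw [gaussianPDF_def, ENNReal.toReal_ofReal (gaussianPDFReal_nonneg m v x)]
  have hInt : ∀ g : ℝ → ℝ, ∫ x, g x ∂(volume.withDensity (gaussianPDF m v)) =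
      ∫ x, g x * gaussianPDFReal m v x := by
    intro g
    have hd : volume.withDensity (gaussianPDF m v) =
        volume.withDensity (fun x => ((gaussianPDFReal m v x).toNNReal : ℝ≥0∞)) := rfl
    rw [hd, integral_withDensity_eq_integral_smul (measurable_gaussianPDFReal m v).real_toNNReal g]
    congr 1; funext x
    rw [NNReal.smul_def, Real.coe_toNNReal _ (gaussianPDFReal_nonneg m v x), smul_eq_mul, mul_comm]
  have hMP := measurePreserving_add_right (volume : Measure ℝ) m
  have hEMB : MeasurableEmbedding (fun y : ℝ => y + m) :=
    (Homeomorph.addRight m).measurableEmbedding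
  have hshiftInt : ∀ g : ℝ → ℝ,
      Integrable (fun y => g (y + m) * (c * Real.exp (-b * y ^ 2))) volume →
      Integrable (fun x => g x * gaussianPDFReal m v x) volume := by
    intro g hg
    rw [← hMP.integrable_comp_emb hEMB]
    apply hg.congr
    filter_upwards with y
    simp only [Function.comp]
    rw [hpdf y]
  have hshiftVal : ∀ g : ℝ → ℝ, (∫ x, g x * gaussianPDFReal m v x) =
      ∫ y, g (y + m) * (c * Real.exp (-b * y ^ 2)) := by
    intro g
    rw [← integral_add_right_eq_self (fun x => g x * gaussianPDFReal m v x) m]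
    congr 1; funext y; rw [hpdf y]
  refine ⟨(hiff _).2 (hshiftInt _ J1), (hiff _).2 (hshiftInt _ J2), ?_, ?_⟩
  · rw [hInt, hshiftVal, V1]
  · rw [hInt, hshiftVal, V2]

lemma map_moments {Ω : Type*} [MeasurableSpace Ω] {P : Measure Ω} {f : Ω → ℝ}
    (hf : Measurable f) {m : ℝ} {v : ℝ≥0} (h : Measure.map f P = gaussianReal m v) :
    Integrable f P ∧ Integrable (fun ω => f ω ^ 2) P ∧
    (∫ ω, f ω ∂P) = m ∧ (∫ ω, f ω ^ 2 ∂P) = (v : ℝ) + m ^ 2 := by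
  obtain ⟨i1, i2, e1, e2⟩ := gaussianReal_moments m v
  rw [← h] at i1 i2 e1 e2
  have hae : AEMeasurable f P := hf.aemeasurable
  refine ⟨?_, ?_, ?_, ?_⟩
  · exact (integrable_map_measure measurable_id.aestronglyMeasurable hae).1 i1
  · exact (integrable_map_measure (measurable_id.pow_const 2).aestronglyMeasurable hae).1 i2
  · rw [← e1]
    exact (integral_map hae measurable_id.aestronglyMeasurable).symm
  · rw [← e2]
    exact (integral_map hae (measurable_id.pow_const 2).aestronglyMeasurable).symm

lemma diff_sq_moments {Ω : Type*} [MeasurableSpace Ω] {P : Measure Ω} [IsProbabilityMeasure P]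
    {A B : Ω → ℝ} (hA : Measurable A) (hB : Measurable B)
    {m : ℝ} {v : ℝ≥0} (hGA : Measure.map A P = gaussianReal m v)
    (hGB : Measure.map B P = gaussianReal m v) (hInd : IndepFun A B P) :
    Integrable (fun ω => (A ω - B ω) ^ 2) P ∧
    (∫ ω, (A ω - B ω) ^ 2 ∂P) = 2 * (v : ℝ) := by
  obtain ⟨iA, iA2, eA, eA2⟩ := map_moments hA hGA
  obtain ⟨iB, iB2, eB, eB2⟩ := map_moments hB hGB
  have iAB : Integrable (fun ω => A ω * B ω) P := hInd.integrable_mul iA iB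
  have eAB : (∫ ω, A ω * B ω ∂P) = m * m := by
    have h := hInd.integral_fun_mul_eq_mul_integral iA.1 iB.1
    simpa [eA, eB] using h
  have hpt : (fun ω => (A ω - B ω) ^ 2) =
      fun ω => (A ω ^ 2 - 2 * (A ω * B ω)) + B ω ^ 2 := by
    funext ω; ring
  have hm2 : Integrable (fun ω => 2 * (A ω * B ω)) P := iAB.const_mul 2
  have hsub : Integrable (fun ω => A ω ^ 2 - 2 * (A ω * B ω)) P := iA2.sub hm2
  constructor
  · rw [hpt]; exact hsub.add iB2
  · rw [hpt, integral_add hsub iB2, integral_sub iA2 hm2, integral_const_mul, eA2, eB2, eAB]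
    ring

lemma dot_measurable {d : ℕ} (u : Fin d → ℝ) :
    Measurable (fun w : Fin d → ℝ => u ⬝ᵥ w) := by
  unfold dotProduct
  exact Finset.measurable_sum _ fun i _ => by fun_prop

lemma vec_diff_sq_moments {Ω : Type*} [MeasurableSpace Ω] {P : Measure Ω}
    [IsProbabilityMeasure P] {d : ℕ}
    {U V : Ω → Fin d → ℝ} (hU : Measurable U) (hV : Measurable V)
    {μ : Fin d → ℝ} {S : Matrix (Fin d) (Fin d) ℝ}
    (hnn : ∀ u : Fin d → ℝ, 0 ≤ u ⬝ᵥ S.mulVec u)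
    (hGU : IsGaussianVec P U μ S) (hGV : IsGaussianVec P V μ S)
    (hInd : IndepFun U V P) (u : Fin d → ℝ) :
    Integrable (fun ω => (u ⬝ᵥ (U ω - V ω)) ^ 2) P ∧
      (∫ ω, (u ⬝ᵥ (U ω - V ω)) ^ 2 ∂P) = 2 * (u ⬝ᵥ S.mulVec u) := by
  have hIndu : IndepFun (fun ω => u ⬝ᵥ U ω) (fun ω => u ⬝ᵥ V ω) P :=
    hInd.comp (dot_measurable u) (dot_measurable u)
  have h := diff_sq_moments ((dot_measurable u).comp hU) ((dot_measurable u).comp hV)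
    (hGU u) (hGV u) hIndu
  have hpt : ∀ ω, u ⬝ᵥ (U ω - V ω) = u ⬝ᵥ U ω - u ⬝ᵥ V ω := by
    intro ω; rw [dotProduct_sub]
  have hco : ((u ⬝ᵥ S.mulVec u).toNNReal : ℝ) = u ⬝ᵥ S.mulVec u :=
    Real.coe_toNNReal _ (hnn u)
  simp only [Function.comp] at h
  constructor
  · apply h.1.congr; filter_upwards with ω; rw [hpt ω]
  · rw [show (fun ω => (u ⬝ᵥ (U ω - V ω)) ^ 2) = fun ω => (u ⬝ᵥ U ω - u ⬝ᵥ V ω) ^ 2 from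
      funext fun ω => by rw [hpt ω]]
    rw [h.2, hco]

lemma vec_diff_cov {Ω : Type*} [MeasurableSpace Ω] {P : Measure Ω}
    [IsProbabilityMeasure P] {d : ℕ}
    {U V : Ω → Fin d → ℝ} (hU : Measurable U) (hV : Measurable V)
    {μ : Fin d → ℝ} {S : Matrix (Fin d) (Fin d) ℝ}
    (hnn : ∀ u : Fin d → ℝ, 0 ≤ u ⬝ᵥ S.mulVec u)
    (hGU : IsGaussianVec P U μ S) (hGV : IsGaussianVec P V μ S)
    (hInd : IndepFun U V P) (a c : Fin d) :
    Integrable (fun ω => (U ω - V ω) a * (U ω - V ω) c) P ∧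
      (∫ ω, (U ω - V ω) a * (U ω - V ω) c ∂P) = S a c + S c a := by
  have hsingle : ∀ (i : Fin d) (w : Fin d → ℝ), Pi.single i (1:ℝ) ⬝ᵥ w = w i := by
    intro i w; rw [single_dotProduct, one_mul]
  have hdot : ∀ i j : Fin d, (Pi.single i (1:ℝ)) ⬝ᵥ S.mulVec (Pi.single j 1) = S i j := by
    intro i j; rw [Matrix.mulVec_single, single_dotProduct]; simp
  obtain ⟨iac, vac⟩ := vec_diff_sq_moments hU hV hnn hGU hGV hInd
    (Pi.single a 1 + Pi.single c 1)
  obtain ⟨ia, va⟩ := vec_diff_sq_moments hU hV hnn hGU hGV hInd (Pi.single a 1)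
  obtain ⟨ic, vc⟩ := vec_diff_sq_moments hU hV hnn hGU hGV hInd (Pi.single c 1)
  have hpt : ∀ ω, (U ω - V ω) a * (U ω - V ω) c =
      (((Pi.single a 1 + Pi.single c 1) ⬝ᵥ (U ω - V ω)) ^ 2
        - (Pi.single a (1:ℝ) ⬝ᵥ (U ω - V ω)) ^ 2
        - (Pi.single c (1:ℝ) ⬝ᵥ (U ω - V ω)) ^ 2) / 2 := by
    intro ω
    rw [add_dotProduct, hsingle, hsingle]
    ring
  have hi1 : Integrable (fun ω =>
      (((Pi.single a 1 + Pi.single c 1) ⬝ᵥ (U ω - V ω)) ^ 2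
        - (Pi.single a (1:ℝ) ⬝ᵥ (U ω - V ω)) ^ 2)) P := iac.sub ia
  have hi2 : Integrable (fun ω =>
      (((Pi.single a 1 + Pi.single c 1) ⬝ᵥ (U ω - V ω)) ^ 2
        - (Pi.single a (1:ℝ) ⬝ᵥ (U ω - V ω)) ^ 2
        - (Pi.single c (1:ℝ) ⬝ᵥ (U ω - V ω)) ^ 2)) P := hi1.sub ic
  have hvadd : (Pi.single a (1:ℝ) + Pi.single c 1) ⬝ᵥ
      S.mulVec (Pi.single a 1 + Pi.single c 1) = S a a + S a c + S c a + S c c := by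
    rw [Matrix.mulVec_add, dotProduct_add, add_dotProduct, add_dotProduct, hdot, hdot, hdot, hdot]
    ring
  constructor
  · apply (hi2.div_const 2).congr
    filter_upwards with ω
    rw [hpt ω]
  · rw [show (fun ω => (U ω - V ω) a * (U ω - V ω) c) = fun ω =>
      (((Pi.single a 1 + Pi.single c 1) ⬝ᵥ (U ω - V ω)) ^ 2
        - (Pi.single a (1:ℝ) ⬝ᵥ (U ω - V ω)) ^ 2
        - (Pi.single c (1:ℝ) ⬝ᵥ (U ω - V ω)) ^ 2) / 2 from funext fun ω => hpt ω]
    rw [integral_div, integral_sub hi1 ic, integral_sub iac ia, vac, va, vc, hvadd, hdot, hdot]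
    ring

lemma cross_term {Ω : Type*} [MeasurableSpace Ω] {P : Measure Ω} [IsProbabilityMeasure P]
    {d : ℕ} {Z W : Ω → Fin d → ℝ} (hZW : IndepFun Z W P)
    (Ts Ci Cr : Matrix (Fin d) (Fin d) ℝ)
    (hZ : ∀ a c, Integrable (fun ω => Z ω a * Z ω c) P ∧
      (∫ ω, Z ω a * Z ω c ∂P) = Ci a c)
    (hW : ∀ b e, Integrable (fun ω => W ω b * W ω e) P ∧
      (∫ ω, W ω b * W ω e ∂P) = Cr b e) :
    Integrable (fun ω => (Z ω ⬝ᵥ Ts.mulVec (W ω)) ^ 2) P ∧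
      (∫ ω, (Z ω ⬝ᵥ Ts.mulVec (W ω)) ^ 2 ∂P) =
        ∑ a, ∑ c, ∑ b, ∑ e, Ts a b * Ts c e * (Ci a c * Cr b e) := by
  have hind : ∀ a c b e : Fin d, IndepFun (fun ω => Z ω a * Z ω c)
      (fun ω => W ω b * W ω e) P := fun a c b e =>
    hZW.comp ((measurable_pi_apply a).mul (measurable_pi_apply c))
      ((measurable_pi_apply b).mul (measurable_pi_apply e))
  have hintterm : ∀ a c b e : Fin d,
      Integrable (fun ω => Ts a b * Ts c e * ((Z ω a * Z ω c) * (W ω b * W ω e))) P :=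
    fun a c b e => (((hind a c b e).integrable_mul (hZ a c).1 (hW b e).1).const_mul _)
  have hvalterm : ∀ a c b e : Fin d,
      (∫ ω, Ts a b * Ts c e * ((Z ω a * Z ω c) * (W ω b * W ω e)) ∂P) =
        Ts a b * Ts c e * (Ci a c * Cr b e) := by
    intro a c b e
    rw [integral_const_mul]
    have h := (hind a c b e).integral_fun_mul_eq_mul_integral (hZ a c).1.1 (hW b e).1.1
    have h2 : (∫ ω, (Z ω a * Z ω c) * (W ω b * W ω e) ∂P) =
        (∫ ω, Z ω a * Z ω c ∂P) * ∫ ω, W ω b * W ω e ∂P := by simpa using h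
    rw [h2, (hZ a c).2, (hW b e).2]
  have hpt : ∀ ω, (Z ω ⬝ᵥ Ts.mulVec (W ω)) ^ 2 =
      ∑ a, ∑ c, ∑ b, ∑ e, Ts a b * Ts c e * ((Z ω a * Z ω c) * (W ω b * W ω e)) := by
    intro ω
    rw [pow_two, dotProduct, Finset.sum_mul_sum]
    refine Finset.sum_congr rfl fun a _ => Finset.sum_congr rfl fun c _ => ?_
    simp only [Matrix.mulVec, dotProduct]
    rw [Finset.mul_sum, Finset.mul_sum, Finset.sum_mul_sum]
    exact Finset.sum_congr rfl fun b _ => Finset.sum_congr rfl fun e _ => by ring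
  have hfun : (fun ω => (Z ω ⬝ᵥ Ts.mulVec (W ω)) ^ 2) =
      fun ω => ∑ a, ∑ c, ∑ b, ∑ e,
        Ts a b * Ts c e * ((Z ω a * Z ω c) * (W ω b * W ω e)) := funext hpt
  have hint4 : ∀ a c b : Fin d, Integrable (fun ω => ∑ e,
      Ts a b * Ts c e * ((Z ω a * Z ω c) * (W ω b * W ω e))) P :=
    fun a c b => integrable_finset_sum _ fun e _ => hintterm a c b e
  have hint3 : ∀ a c : Fin d, Integrable (fun ω => ∑ b, ∑ e,
      Ts a b * Ts c e * ((Z ω a * Z ω c) * (W ω b * W ω e))) P :=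
    fun a c => integrable_finset_sum _ fun b _ => hint4 a c b
  have hint2 : ∀ a : Fin d, Integrable (fun ω => ∑ c, ∑ b, ∑ e,
      Ts a b * Ts c e * ((Z ω a * Z ω c) * (W ω b * W ω e))) P :=
    fun a => integrable_finset_sum _ fun c _ => hint3 a c
  constructor
  · rw [hfun]
    exact integrable_finset_sum _ fun a _ => hint2 a
  · rw [hfun, integral_finset_sum _ fun a _ => hint2 a]
    refine Finset.sum_congr rfl fun a _ => ?_
    rw [integral_finset_sum _ fun c _ => hint3 a c]
    refine Finset.sum_congr rfl fun c _ => ?_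
    rw [integral_finset_sum _ fun b _ => hint4 a c b]
    refine Finset.sum_congr rfl fun b _ => ?_
    rw [integral_finset_sum _ fun e _ => hintterm a c b e]
    exact Finset.sum_congr rfl fun e _ => hvalterm a c b e

lemma quad_sum_eq_trace {d : ℕ} (Ts Ci Cr : Matrix (Fin d) (Fin d) ℝ)
    (hTs : ∀ i j, Ts i j = Ts j i) (hCr : ∀ i j, Cr i j = Cr j i) :
    (∑ a, ∑ c, ∑ b, ∑ e, Ts a b * Ts c e * (Ci a c * Cr b e)) =
      (Ts * Ci * Ts * Cr).trace := by
  have htr : (Ts * Ci * Ts * Cr).trace =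
      ∑ x, ∑ y, ∑ z, ∑ w, Ts x w * Ci w z * Ts z y * Cr y x := by
    rw [Matrix.trace]
    simp only [Matrix.diag_apply, Matrix.mul_apply, Finset.sum_mul]
  rw [htr]
  -- convert both sides to sums over a quadruple product type
  have h1 : (∑ a, ∑ c, ∑ b, ∑ e, Ts a b * Ts c e * (Ci a c * Cr b e)) =
      ∑ q : Fin d × Fin d × Fin d × Fin d,
        Ts q.1 q.2.2.1 * Ts q.2.1 q.2.2.2 * (Ci q.1 q.2.1 * Cr q.2.2.1 q.2.2.2) := by
    simp [Fintype.sum_prod_type]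
  have h2 : (∑ x, ∑ y, ∑ z, ∑ w, Ts x w * Ci w z * Ts z y * Cr y x) =
      ∑ p : Fin d × Fin d × Fin d × Fin d,
        Ts p.1 p.2.2.2 * Ci p.2.2.2 p.2.2.1 * Ts p.2.2.1 p.2.1 * Cr p.2.1 p.1 := by
    simp [Fintype.sum_prod_type]
  rw [h1, h2]
  let σ : (Fin d × Fin d × Fin d × Fin d) ≃ (Fin d × Fin d × Fin d × Fin d) :=
    ⟨fun p => (p.2.2.2, p.2.2.1, p.1, p.2.1),
     fun q => (q.2.2.1, q.2.2.2, q.2.1, q.1), fun p => rfl, fun q => rfl⟩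
  refine (Fintype.sum_equiv σ _ _ fun p => ?_).symm
  obtain ⟨x, y, z, w⟩ := p
  simp only [σ, Equiv.coe_fn_mk]
  rw [hTs x w, hCr y x]
  ring

lemma card_lt_pairs (n : ℕ) :
    (Finset.univ.filter fun p : Fin n × Fin n => p.2 < p.1).card = n.choose 2 := by
  rw [Finset.card_filter, Fintype.sum_prod_type]
  have h1 : ∀ a : Fin n, (∑ b : Fin n, if b < a then 1 else 0) = (a : ℕ) := by
    intro a
    rw [← Finset.card_filter]
    have : Finset.univ.filter (fun b : Fin n => b < a) = Finset.Iio a := by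
      ext b; simp
    rw [this, Fin.card_Iio]
  simp_rw [h1]
  rw [Fin.sum_univ_eq_sum_range (fun i => i) n, Finset.sum_range_id, Nat.choose_two_right]

/-- The symmetrized two-sample estimator
`A₂ = (4 C(n_i,2) C(n_r,2))⁻¹ Σ_{ℓ₁>ℓ₂} Σ_{k₁>k₂} [(X_{ℓ₁}−X_{ℓ₂})ᵀ T_S (Y_{k₁}−Y_{k₂})]²`
is unbiased for `tr(T_S Σ_i T_S Σ_r)`. -/
theorem symmetrized_cross_trace_estimator_unbiased
    {Ω : Type*} [MeasurableSpace Ω] (P : Measure Ω) [IsProbabilityMeasure P]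
    {d ni nr : ℕ} (hni : 2 ≤ ni) (hnr : 2 ≤ nr)
    (X : Fin ni → Ω → Fin d → ℝ) (Y : Fin nr → Ω → Fin d → ℝ)
    (hXm : ∀ j, Measurable (X j)) (hYm : ∀ j, Measurable (Y j))
    (μi μr : Fin d → ℝ) (Si Sr : Matrix (Fin d) (Fin d) ℝ)
    (hSi : Si.PosDef) (hSr : Sr.PosDef)
    (hGaussX : ∀ j, IsGaussianVec P (X j) μi Si)
    (hGaussY : ∀ j, IsGaussianVec P (Y j) μr Sr)
    (hIndep : iIndepFun
      (fun k : Fin ni ⊕ Fin nr => Sum.elim X Y k) P)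
    (Ts : Matrix (Fin d) (Fin d) ℝ) (hTs : Ts.IsSymm)
    (A₂ : Ω → ℝ)
    (hA₂ : ∀ ω, A₂ ω = (4 * (ni.choose 2) * (nr.choose 2) : ℝ)⁻¹ *
      ∑ p ∈ Finset.univ.filter (fun p : Fin ni × Fin ni => p.2 < p.1),
        ∑ q ∈ Finset.univ.filter (fun q : Fin nr × Fin nr => q.2 < q.1),
          ((X p.1 ω - X p.2 ω) ⬝ᵥ Ts.mulVec (Y q.1 ω - Y q.2 ω)) ^ 2) :
    (∫ ω, A₂ ω ∂P) = (Ts * Si * Ts * Sr).trace := by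
  classical
  have hXYmeas : ∀ k : Fin ni ⊕ Fin nr, Measurable (Sum.elim X Y k) := by
    intro k
    cases k with
    | inl a => exact hXm a
    | inr b => exact hYm b
  have hnnSi : ∀ u : Fin d → ℝ, 0 ≤ u ⬝ᵥ Si.mulVec u := fun u => by
    simpa using hSi.posSemidef.dotProduct_mulVec_nonneg u
  have hnnSr : ∀ u : Fin d → ℝ, 0 ≤ u ⬝ᵥ Sr.mulVec u := fun u => by
    simpa using hSr.posSemidef.dotProduct_mulVec_nonneg u
  have hSis : ∀ i j, Si i j = Si j i := fun i j => by
    simpa using hSi.isHermitian.apply j i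
  have hSrs : ∀ i j, Sr i j = Sr j i := fun i j => by
    simpa using hSr.isHermitian.apply j i
  have hTs' : ∀ i j, Ts i j = Ts j i := fun i j => hTs.apply j i
  -- main per-pair computation
  have main : ∀ (ℓ1 ℓ2 : Fin ni) (k1 k2 : Fin nr), ℓ1 ≠ ℓ2 → k1 ≠ k2 →
      Integrable (fun ω => ((X ℓ1 ω - X ℓ2 ω) ⬝ᵥ Ts.mulVec (Y k1 ω - Y k2 ω)) ^ 2) P ∧
      (∫ ω, ((X ℓ1 ω - X ℓ2 ω) ⬝ᵥ Ts.mulVec (Y k1 ω - Y k2 ω)) ^ 2 ∂P) =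
        (Ts * (Si + Siᵀ) * Ts * (Sr + Srᵀ)).trace := by
    intro ℓ1 ℓ2 k1 k2 h12 hk
    have hpair := hIndep.indepFun_prodMk_prodMk hXYmeas
      (Sum.inl ℓ1) (Sum.inl ℓ2) (Sum.inr k1) (Sum.inr k2)
      (by simp) (by simp) (by simp) (by simp)
    have hsubm : Measurable (fun p : (Fin d → ℝ) × (Fin d → ℝ) => p.1 - p.2) :=
      measurable_fst.sub measurable_snd
    have hZW : IndepFun (fun ω => X ℓ1 ω - X ℓ2 ω) (fun ω => Y k1 ω - Y k2 ω) P := by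
      have h := hpair.comp hsubm hsubm
      exact h
    have hXind : IndepFun (X ℓ1) (X ℓ2) P := by
      have h := hIndep.indepFun
        (show (Sum.inl ℓ1 : Fin ni ⊕ Fin nr) ≠ Sum.inl ℓ2 by simp [h12])
      simpa using h
    have hYind : IndepFun (Y k1) (Y k2) P := by
      have h := hIndep.indepFun
        (show (Sum.inr k1 : Fin ni ⊕ Fin nr) ≠ Sum.inr k2 by simp [hk])
      simpa using h
    have hZ' : ∀ a c, Integrable (fun ω =>
          (fun ω => X ℓ1 ω - X ℓ2 ω) ω a * (fun ω => X ℓ1 ω - X ℓ2 ω) ω c) P ∧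
        (∫ ω, (fun ω => X ℓ1 ω - X ℓ2 ω) ω a * (fun ω => X ℓ1 ω - X ℓ2 ω) ω c ∂P) =
          (Si + Siᵀ) a c := by
      intro a c
      obtain ⟨h1, h2⟩ := vec_diff_cov (hXm ℓ1) (hXm ℓ2) hnnSi
        (hGaussX ℓ1) (hGaussX ℓ2) hXind a c
      exact ⟨h1, by rw [h2]; simp [Matrix.add_apply, Matrix.transpose_apply]⟩
    have hW' : ∀ b e, Integrable (fun ω =>
          (fun ω => Y k1 ω - Y k2 ω) ω b * (fun ω => Y k1 ω - Y k2 ω) ω e) P ∧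
        (∫ ω, (fun ω => Y k1 ω - Y k2 ω) ω b * (fun ω => Y k1 ω - Y k2 ω) ω e ∂P) =
          (Sr + Srᵀ) b e := by
      intro b e
      obtain ⟨h1, h2⟩ := vec_diff_cov (hYm k1) (hYm k2) hnnSr
        (hGaussY k1) (hGaussY k2) hYind b e
      exact ⟨h1, by rw [h2]; simp [Matrix.add_apply, Matrix.transpose_apply]⟩
    obtain ⟨hi, hv⟩ := cross_term hZW Ts (Si + Siᵀ) (Sr + Srᵀ) hZ' hW'
    refine ⟨hi, ?_⟩
    rw [hv]
    exact quad_sum_eq_trace Ts _ _ hTs'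
      (fun i j => by simp only [Matrix.add_apply, Matrix.transpose_apply]; ring)
  have htrace4 : (Ts * (Si + Siᵀ) * Ts * (Sr + Srᵀ)).trace =
      4 * (Ts * Si * Ts * Sr).trace := by
    have e1 : Si + Siᵀ = (2:ℝ) • Si := by
      ext i j
      rw [Matrix.add_apply, Matrix.transpose_apply, Matrix.smul_apply, hSis j i,
        smul_eq_mul, two_mul]
    have e2 : Sr + Srᵀ = (2:ℝ) • Sr := by
      ext i j
      rw [Matrix.add_apply, Matrix.transpose_apply, Matrix.smul_apply, hSrs j i,
        smul_eq_mul, two_mul]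
    rw [e1, e2]
    simp only [Matrix.mul_smul, Matrix.smul_mul, Matrix.trace_smul, smul_smul, smul_eq_mul]
    ring
  -- assembly
  set τ : ℝ := (Ts * Si * Ts * Sr).trace with hτ
  have hA : (fun ω => A₂ ω) = fun ω => (4 * (ni.choose 2) * (nr.choose 2) : ℝ)⁻¹ *
      ∑ p ∈ Finset.univ.filter (fun p : Fin ni × Fin ni => p.2 < p.1),
        ∑ q ∈ Finset.univ.filter (fun q : Fin nr × Fin nr => q.2 < q.1),
          ((X p.1 ω - X p.2 ω) ⬝ᵥ Ts.mulVec (Y q.1 ω - Y q.2 ω)) ^ 2 := funext hA₂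
  rw [hA, integral_const_mul]
  have hip : ∀ p ∈ Finset.univ.filter (fun p : Fin ni × Fin ni => p.2 < p.1),
      ∀ q ∈ Finset.univ.filter (fun q : Fin nr × Fin nr => q.2 < q.1),
      Integrable (fun ω => ((X p.1 ω - X p.2 ω) ⬝ᵥ Ts.mulVec (Y q.1 ω - Y q.2 ω)) ^ 2) P ∧
      (∫ ω, ((X p.1 ω - X p.2 ω) ⬝ᵥ Ts.mulVec (Y q.1 ω - Y q.2 ω)) ^ 2 ∂P) = 4 * τ := by
    intro p hp q hq
    have h1 : p.2 < p.1 := (Finset.mem_filter.1 hp).2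
    have h2 : q.2 < q.1 := (Finset.mem_filter.1 hq).2
    obtain ⟨hi, hv⟩ := main p.1 p.2 q.1 q.2 (ne_of_gt h1) (ne_of_gt h2)
    exact ⟨hi, by rw [hv, htrace4]⟩
  have hsum : (∫ ω, ∑ p ∈ Finset.univ.filter (fun p : Fin ni × Fin ni => p.2 < p.1),
        ∑ q ∈ Finset.univ.filter (fun q : Fin nr × Fin nr => q.2 < q.1),
          ((X p.1 ω - X p.2 ω) ⬝ᵥ Ts.mulVec (Y q.1 ω - Y q.2 ω)) ^ 2 ∂P) =
      (ni.choose 2 : ℝ) * ((nr.choose 2 : ℝ) * (4 * τ)) := by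
    rw [integral_finset_sum _ fun p hp => integrable_finset_sum _ fun q hq =>
      (hip p hp q hq).1]
    have hinner : ∀ p ∈ Finset.univ.filter (fun p : Fin ni × Fin ni => p.2 < p.1),
        (∫ ω, ∑ q ∈ Finset.univ.filter (fun q : Fin nr × Fin nr => q.2 < q.1),
          ((X p.1 ω - X p.2 ω) ⬝ᵥ Ts.mulVec (Y q.1 ω - Y q.2 ω)) ^ 2 ∂P) =
        (nr.choose 2 : ℝ) * (4 * τ) := by
      intro p hp
      rw [integral_finset_sum _ fun q hq => (hip p hp q hq).1]
      rw [Finset.sum_congr rfl fun q hq => (hip p hp q hq).2]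
      rw [Finset.sum_const, card_lt_pairs, nsmul_eq_mul]
    rw [Finset.sum_congr rfl hinner, Finset.sum_const, card_lt_pairs, nsmul_eq_mul]
  rw [hsum]
  have hc1 : ((ni.choose 2 : ℕ) : ℝ) ≠ 0 := Nat.cast_ne_zero.2 (Nat.choose_pos hni).ne'
  have hc2 : ((nr.choose 2 : ℕ) : ℝ) ≠ 0 := Nat.cast_ne_zero.2 (Nat.choose_pos hnr).ne'
  field_simp
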